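/- Lyapunov decrease along the frozen dynamics (key step in the proof of Proposition 3). Assume k_i > 0 for all i. If V : [0,∞) → ℝⁿ is continuously differentiable, satisfies V̇_i(t) = V_i(t) (Ψ V(t))_i for all i and t ≥ 0, and V(t) ∈ ℝⁿ₊ for all t ≥ 0, then for every t ≥ 0 one has d/dt [ Σ_i V_i(t) ] = V(t)ᵀ Ψ V(t) ≤ 0, with equality only when V(t) = 0. -/

import Mathlib

open Finset Matrix

lemma sum_ite_ne' {n : ℕ} (i : Fin n) (f : Fin n → ℝ) :
    ∑ j, (if i = j then 0 else f j) = ∑ j ∈ Finset.univ.erase i, f j := by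
  rw [← Finset.sum_erase_add _ _ (Finset.mem_univ i), if_pos rfl, add_zero]
  exact Finset.sum_congr rfl (fun j hj => by
    rw [if_neg (Ne.symm (Finset.ne_of_mem_erase hj))])

lemma quad_bound {n : ℕ} (B G : Fin n → Fin n → ℝ) (Bsh k : Fin n → ℝ)
    (Δc Δs : Fin n → Fin n → ℝ)
    (Ψ : Matrix (Fin n) (Fin n) ℝ)
    (hBsymm : ∀ i j, B i j = B j i)
    (hGsymm : ∀ i j, G i j = G j i)
    (hBsh : ∀ i, 0 ≤ Bsh i)
    (hΔc_symm : ∀ i j, Δc i j = Δc j i)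
    (hΔc_mem : ∀ i j, i ≠ j → Δc i j ∈ Set.Icc (-1 : ℝ) 1)
    (hΔs_skew : ∀ i j, Δs i j = -Δs j i)
    (hΨdiag : ∀ i, Ψ i i = -((Bsh i + ∑ j ∈ Finset.univ.erase i, |B i j|) + k i))
    (hΨoff : ∀ i j, i ≠ j → Ψ i j = G i j * Δs i j + |B i j| * Δc i j)
    (v : Fin n → ℝ) (hv : ∀ i, 0 ≤ v i) :
    v ⬝ᵥ Ψ.mulVec v ≤ -∑ i, k i * v i ^ 2 := by
  have hQ : v ⬝ᵥ Ψ.mulVec v = ∑ i, ∑ j, v i * (Ψ i j * v j) := by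
    simp [dotProduct, Matrix.mulVec, Finset.mul_sum]
  set F : Fin n → Fin n → ℝ := fun i j => v i * (Ψ i j * v j) with hF
  have hsymm : ∑ i, ∑ j, F i j = ∑ i, ∑ j, (F i j + F j i) / 2 := by
    have hc : ∑ i, ∑ j, F j i = ∑ i, ∑ j, F i j := Finset.sum_comm
    have : ∑ i, ∑ j, (F i j + F j i) / 2
        = (∑ i, ∑ j, F i j + ∑ i, ∑ j, F j i) / 2 := by
      rw [← Finset.sum_add_distrib, Finset.sum_div]
      refine Finset.sum_congr rfl fun i _ => ?_
      rw [← Finset.sum_add_distrib, Finset.sum_div]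
    rw [this, hc]; ring
  -- pointwise bound after symmetrization
  have hpt : ∀ i j, (F i j + F j i) / 2 ≤
      (if i = j then Ψ i i * v i ^ 2 else |B i j| * (v i ^ 2 + v j ^ 2) / 2) := by
    intro i j
    by_cases hij : i = j
    · subst hij; rw [if_pos rfl]; simp only [hF]; ring_nf; exact le_refl _
    · rw [if_neg hij]
      have e1 : Ψ i j = G i j * Δs i j + |B i j| * Δc i j := hΨoff i j hij
      have e2 : Ψ j i = G i j * (-Δs i j) + |B i j| * Δc i j := by
        rw [hΨoff j i (Ne.symm hij), hΔs_skew j i, hGsymm j i, hBsymm j i, hΔc_symm j i]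
      have hΔc1 := (hΔc_mem i j hij).2
      have hvi := hv i; have hvj := hv j
      have h0 : (0:ℝ) ≤ |B i j| := abs_nonneg _
      simp only [hF, e1, e2]
      nlinarith [mul_nonneg h0 (sq_nonneg (v i - v j)),
        mul_nonneg (mul_nonneg h0 hvi) hvj]
  -- sum of the bound
  have hsum : ∑ i, ∑ j, (if i = j then Ψ i i * v i ^ 2 else |B i j| * (v i ^ 2 + v j ^ 2) / 2)
      = ∑ i, (Ψ i i + ∑ j ∈ Finset.univ.erase i, |B i j|) * v i ^ 2 := by
    have hsplit : ∀ i j, (if i = j then Ψ i i * v i ^ 2 else |B i j| * (v i ^ 2 + v j ^ 2) / 2)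
        = (if i = j then Ψ i i * v i ^ 2 else 0)
          + (if i = j then 0 else |B i j| * v i ^ 2 / 2)
          + (if i = j then 0 else |B i j| * v j ^ 2 / 2) := by
      intro i j; by_cases h : i = j <;> simp [h] <;> ring
    have h1 : ∑ i, ∑ j, (if i = j then Ψ i i * v i ^ 2 else 0) = ∑ i, Ψ i i * v i ^ 2 := by
      refine Finset.sum_congr rfl fun i _ => ?_
      simp [Finset.sum_ite_eq]
    have h2 : ∀ i, ∑ j, (if i = j then 0 else |B i j| * v i ^ 2 / 2)
        = (∑ j ∈ Finset.univ.erase i, |B i j|) * (v i ^ 2 / 2) := by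
      intro i
      rw [sum_ite_ne' i (fun j => |B i j| * v i ^ 2 / 2), Finset.sum_mul]
      exact Finset.sum_congr rfl fun j _ => by ring
    have h3 : ∑ i, ∑ j, (if i = j then 0 else |B i j| * v j ^ 2 / 2)
        = ∑ i, ∑ j, (if i = j then 0 else |B i j| * v i ^ 2 / 2) := by
      rw [Finset.sum_comm]
      refine Finset.sum_congr rfl fun i _ => Finset.sum_congr rfl fun j _ => ?_
      by_cases h : i = j
      · simp [h]
      · rw [if_neg (fun hh => h hh.symm), if_neg h, hBsymm j i]
    calc ∑ i, ∑ j, (if i = j then Ψ i i * v i ^ 2 else |B i j| * (v i ^ 2 + v j ^ 2) / 2)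
        = ∑ i, ∑ j, ((if i = j then Ψ i i * v i ^ 2 else 0)
            + (if i = j then 0 else |B i j| * v i ^ 2 / 2)
            + (if i = j then 0 else |B i j| * v j ^ 2 / 2)) := by
          exact Finset.sum_congr rfl fun i _ => Finset.sum_congr rfl fun j _ => hsplit i j
      _ = ∑ i, ∑ j, (if i = j then Ψ i i * v i ^ 2 else 0)
          + ∑ i, ∑ j, (if i = j then 0 else |B i j| * v i ^ 2 / 2)
          + ∑ i, ∑ j, (if i = j then 0 else |B i j| * v j ^ 2 / 2) := by
          rw [← Finset.sum_add_distrib, ← Finset.sum_add_distrib]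
          exact Finset.sum_congr rfl fun i _ => by
            rw [← Finset.sum_add_distrib, ← Finset.sum_add_distrib]
      _ = ∑ i, Ψ i i * v i ^ 2
          + ∑ i, (∑ j ∈ Finset.univ.erase i, |B i j|) * (v i ^ 2 / 2)
          + ∑ i, (∑ j ∈ Finset.univ.erase i, |B i j|) * (v i ^ 2 / 2) := by
          rw [h1, h3, Finset.sum_congr rfl fun i _ => h2 i]
      _ = ∑ i, (Ψ i i + ∑ j ∈ Finset.univ.erase i, |B i j|) * v i ^ 2 := by
          rw [← Finset.sum_add_distrib, ← Finset.sum_add_distrib]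
          exact Finset.sum_congr rfl fun i _ => by ring
  have hfinal : ∑ i, (Ψ i i + ∑ j ∈ Finset.univ.erase i, |B i j|) * v i ^ 2
      ≤ -∑ i, k i * v i ^ 2 := by
    rw [← Finset.sum_neg_distrib]
    refine Finset.sum_le_sum fun i _ => ?_
    rw [hΨdiag i]
    nlinarith [mul_nonneg (hBsh i) (sq_nonneg (v i))]
  calc v ⬝ᵥ Ψ.mulVec v = ∑ i, ∑ j, F i j := hQ
    _ = ∑ i, ∑ j, (F i j + F j i) / 2 := hsymm
    _ ≤ ∑ i, ∑ j, (if i = j then Ψ i i * v i ^ 2 else |B i j| * (v i ^ 2 + v j ^ 2) / 2) :=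
        Finset.sum_le_sum fun i _ => Finset.sum_le_sum fun j _ => hpt i j
    _ = ∑ i, (Ψ i i + ∑ j ∈ Finset.univ.erase i, |B i j|) * v i ^ 2 := hsum
    _ ≤ -∑ i, k i * v i ^ 2 := hfinal


/-- Lyapunov decrease along the frozen dynamics (key step in the
proof of Proposition 3). Along nonnegative solutions of `V̇ = diag(V) Ψ V` one
has `d/dt Σᵢ Vᵢ = Vᵀ Ψ V ≤ 0`, with equality only at `V = 0`. -/
theorem frozen_system_lyapunov_decrease
    (n : ℕ) (hn : 1 ≤ n)
    (B G : Fin n → Fin n → ℝ) (Bsh k : Fin n → ℝ)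
    (Δc Δs : Fin n → Fin n → ℝ)
    (hBsymm : ∀ i j, B i j = B j i)
    (hBle : ∀ i j, i ≠ j → B i j ≤ 0)
    (hGsymm : ∀ i j, G i j = G j i)
    (hGge : ∀ i j, i ≠ j → 0 ≤ G i j)
    (hBsh : ∀ i, 0 ≤ Bsh i)
    (hk : ∀ i, 0 < k i)
    (hΔc_symm : ∀ i j, Δc i j = Δc j i)
    (hΔc_mem : ∀ i j, i ≠ j → Δc i j ∈ Set.Icc (-1 : ℝ) 1)
    (hΔs_skew : ∀ i j, Δs i j = -Δs j i)
    (hΔs_mem : ∀ i j, i ≠ j → Δs i j ∈ Set.Icc (-1 : ℝ) 1)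
    (Ψ : Matrix (Fin n) (Fin n) ℝ)
    (hΨdiag : ∀ i, Ψ i i = -((Bsh i + ∑ j ∈ Finset.univ.erase i, |B i j|) + k i))
    (hΨoff : ∀ i j, i ≠ j → Ψ i j = G i j * Δs i j + |B i j| * Δc i j)
    (V : ℝ → Fin n → ℝ)
    (hC1 : ∀ i, ContDiffOn ℝ 1 (fun t => V t i) (Set.Ici 0))
    (hODE : ∀ i, ∀ t ∈ Set.Ici (0 : ℝ),
      HasDerivAt (fun s => V s i) (V t i * Ψ.mulVec (V t) i) t)
    (hVnonneg : ∀ t ∈ Set.Ici (0 : ℝ), ∀ i, 0 ≤ V t i) :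
    ∀ t ∈ Set.Ici (0 : ℝ),
      HasDerivAt (fun s => ∑ i, V s i) (V t ⬝ᵥ Ψ.mulVec (V t)) t ∧
      V t ⬝ᵥ Ψ.mulVec (V t) ≤ 0 ∧
      (V t ⬝ᵥ Ψ.mulVec (V t) = 0 → V t = 0) := by
  intro t ht
  have hv : ∀ i, 0 ≤ V t i := hVnonneg t ht
  have hbound : V t ⬝ᵥ Ψ.mulVec (V t) ≤ -∑ i, k i * V t i ^ 2 :=
    quad_bound B G Bsh k Δc Δs Ψ hBsymm hGsymm hBsh hΔc_symm hΔc_mem hΔs_skew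
      hΨdiag hΨoff (V t) hv
  have hknn : ∀ i ∈ Finset.univ, (0:ℝ) ≤ k i * V t i ^ 2 :=
    fun i _ => mul_nonneg (hk i).le (sq_nonneg _)
  have hsum_nn : (0:ℝ) ≤ ∑ i, k i * V t i ^ 2 := Finset.sum_nonneg hknn
  refine ⟨?_, ?_, ?_⟩
  · have hd : HasDerivAt (fun s => ∑ i, V s i) (∑ i, V t i * Ψ.mulVec (V t) i) t :=
      HasDerivAt.fun_sum fun i _ => hODE i t ht
    simpa [dotProduct] using hd
  · linarith
  · intro hzero
    have h0 : ∑ i, k i * V t i ^ 2 = 0 := by linarith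
    have hall := (Finset.sum_eq_zero_iff_of_nonneg hknn).mp h0
    funext i
    have := hall i (Finset.mem_univ i)
    have hki := hk i
    have : V t i ^ 2 = 0 := by
      rcases mul_eq_zero.mp this with h | h
      · exact absurd h (ne_of_gt hki)
      · exact h
    simpa using pow_eq_zero_iff (n := 2) (by norm_num) |>.mp this
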